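/- Let ι be a finite index set, σ : ι → ℝ with σ(i) > 0 for all i (cell areas), l : ι → ι → ℝ with l(i,j) ≥ 0 (interface lengths), vn : ι → ι → ℝ (interface normal velocities), u : ι → ℝ with u(i) ≥ 0 (cell values of θh), and Δt ≥ 0. Define the upwind interface flux F(i,j) = u(i)·vn(i,j) if vn(i,j) > 0 and F(i,j) = u(j)·vn(i,j) otherwise, and the explicit Euler update u′(i) = u(i) − (Δt/σ(i)) Σ_j l(i,j)·F(i,j). If the CFL-type condition Δt · Σ_j l(i,j) · max(vn(i,j), 0) ≤ σ(i) holds for every i, then u′(i) ≥ 0 for every i. -/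
import Mathlib


open scoped BigOperators

theorem stmt_8 {ι : Type*} [Fintype ι]
    (σ : ι → ℝ) (hσ : ∀ i, 0 < σ i)
    (l : ι → ι → ℝ) (hl : ∀ i j, 0 ≤ l i j)
    (vn : ι → ι → ℝ)
    (u : ι → ℝ) (hu : ∀ i, 0 ≤ u i)
    (Δt : ℝ) (hΔt : 0 ≤ Δt)
    (F : ι → ι → ℝ)
    (hF : F = fun i j => if 0 < vn i j then u i * vn i j else u j * vn i j)
    (u' : ι → ℝ)
    (hu' : u' = fun i => u i - (Δt / σ i) * ∑ j, l i j * F i j)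
    (hCFL : ∀ i, Δt * ∑ j, l i j * max (vn i j) 0 ≤ σ i) :
    ∀ i, 0 ≤ u' i := by
  intro i
  subst hF hu'
  simp only [sub_nonneg]
  have hFle : ∀ j, l i j * (if 0 < vn i j then u i * vn i j else u j * vn i j)
      ≤ u i * (l i j * max (vn i j) 0) := by
    intro j
    split_ifs with h
    · rw [max_eq_left h.le]; ring_nf; exact le_refl _
    · push_neg at h
      rw [max_eq_right h, mul_zero, mul_zero]
      exact mul_nonpos_of_nonneg_of_nonpos (hl i j) (mul_nonpos_of_nonneg_of_nonpos (hu j) h)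
  have hsum : ∑ j, l i j * (if 0 < vn i j then u i * vn i j else u j * vn i j)
      ≤ u i * ∑ j, l i j * max (vn i j) 0 := by
    rw [Finset.mul_sum]; exact Finset.sum_le_sum fun j _ => hFle j
  have h1 : (Δt / σ i) * ∑ j, l i j * (if 0 < vn i j then u i * vn i j else u j * vn i j)
      ≤ (Δt / σ i) * (u i * ∑ j, l i j * max (vn i j) 0) :=
    mul_le_mul_of_nonneg_left hsum (div_nonneg hΔt (hσ i).le)
  refine h1.trans ?_
  have h2 : Δt * ∑ j, l i j * max (vn i j) 0 ≤ σ i := hCFL i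
  have h3 : 0 ≤ ∑ j, l i j * max (vn i j) 0 :=
    Finset.sum_nonneg fun j _ => mul_nonneg (hl i j) (le_max_right _ _)
  rw [div_mul_eq_mul_div, mul_left_comm, mul_div_assoc]
  calc u i * (Δt * (∑ j, l i j * max (vn i j) 0) / σ i)
      ≤ u i * 1 := by
        refine mul_le_mul_of_nonneg_left ?_ (hu i)
        rw [div_le_one (hσ i)]; exact h2
    _ = u i := mul_one _
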